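/- Let v_b, v_c ∈ V(P) with v_b strictly preceding v_c on P, let v_f ∈ V(P) \ {s}, and let Q be an s–v_c departing path avoiding v_f whose branching vertex is v_b and whose prefix from s to v_b equals the sub-path of P from s to v_b. Then: (i) dist_P(v_b, v_c) ≤ w(Q) − dist_P(s, v_b); and (ii) for every x ∈ V(P) \ {v_b, v_c}, the graph G − x contains a path from v_b to v_c of length w(Q) − dist_P(s, v_b). -/

import Mathlib

open scoped ENNReal

/-- A directed graph on vertex type `V` with real edge weights. -/
structure WDigraph (V : Type) where
  Adj : V → V → Prop
  w : V → V → ℝ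

namespace WDigraph

variable {V : Type}

/-- The weighted length of a walk, given as the list of its vertices:
the sum of the weights of consecutive pairs. -/
def len (G : WDigraph V) (l : List V) : ℝ :=
  ((l.zip l.tail).map fun p => G.w p.1 p.2).sum

/-- `l` is a (simple) path from `u` to `v` in `G`: a nonempty list of pairwise distinct
vertices, consecutively joined by edges of `G`, starting at `u` and ending at `v`. -/
def IsPathFrom (G : WDigraph V) (u v : V) (l : List V) : Prop :=
  l.Chain' G.Adj ∧ l.Nodup ∧ l.head? = some u ∧ l.getLast? = some v

/-- The distance from `u` to `v` in `G`: the minimum length of a path from `u` to `v`,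
equal to `∞` if no such path exists. -/
noncomputable def dist (G : WDigraph V) (u v : V) : ℝ≥0∞ :=
  ⨅ (l : List V) (_ : G.IsPathFrom u v l), ENNReal.ofReal (G.len l)

/-- `G − x`: the graph obtained from `G` by deleting the vertex `x`
and all edges incident to it. -/
def deleteVert (G : WDigraph V) (x : V) : WDigraph V where
  Adj a b := G.Adj a b ∧ a ≠ x ∧ b ≠ x
  w := G.w

/-- `G[Ψ(U)]`: the subgraph of `G` consisting of the edges with at least one endpoint
in `U` (and their endpoints). -/
def psiSub (G : WDigraph V) (U : Set V) : WDigraph V where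
  Adj a b := G.Adj a b ∧ (a ∈ U ∨ b ∈ U)
  w := G.w

/-- All edge weights of `G` are positive. -/
def PosWeights (G : WDigraph V) : Prop := ∀ a b, G.Adj a b → 0 < G.w a b

end WDigraph

/-- Every prefix of the path `P` (starting at `s`) is a shortest path in `G`. -/
def ShortestPrefixes {V : Type} (G : WDigraph V) (s : V) (P : List V) : Prop :=
  ∀ k < P.length, ENNReal.ofReal (G.len (P.take (k + 1))) = G.dist s (P.getD k s)
/-- `R` is a *departing* `s`–`t` path avoiding the failed vertex `v_f = P[f]`:
an `s`–`t` path in `G − P[f]` such that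
(C1) the vertices of `R` lying on `P[0, f−1]` form a prefix of `R`, and
(C2) no vertex of `R` other than possibly its last lies on `P[f+1, p−1]`. -/
def IsDeparting {V : Type} (G : WDigraph V) (P : List V) (f : ℕ) (s t : V)
    (R : List V) : Prop :=
  (G.deleteVert (P.getD f s)).IsPathFrom s t R ∧
  (∃ k, (∀ a ∈ R.take k, a ∈ P.take f) ∧ (∀ a ∈ R.drop k, a ∉ P.take f)) ∧
  (∀ a ∈ R.dropLast, a ∉ P.drop (f + 1))

/-- `R` is a *jumping* `s`–`t` path avoiding the failed vertex `v_f = P[f]`: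
an `s`–`t` path in `G − P[f]` satisfying (C1) and
(C3) some vertex of `R` other than its last lies on `P[f+1, p−1]`. -/
def IsJumping {V : Type} (G : WDigraph V) (P : List V) (f : ℕ) (s t : V)
    (R : List V) : Prop :=
  (G.deleteVert (P.getD f s)).IsPathFrom s t R ∧
  (∃ k, (∀ a ∈ R.take k, a ∈ P.take f) ∧ (∀ a ∈ R.drop k, a ∉ P.take f)) ∧
  (∃ a ∈ R.dropLast, a ∈ P.drop (f + 1))

/-- `ddist`: the minimum length of a departing `s`–`t` path avoiding `P[f]`
(`∞` if none exists). -/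
noncomputable def ddist {V : Type} (G : WDigraph V) (P : List V) (f : ℕ)
    (s t : V) : ℝ≥0∞ :=
  ⨅ (R : List V) (_ : IsDeparting G P f s t R), ENNReal.ofReal (G.len R)

/-- `jdist`: the minimum length of a jumping `s`–`t` path avoiding `P[f]`
(`∞` if none exists). -/
noncomputable def jdist {V : Type} (G : WDigraph V) (P : List V) (f : ℕ)
    (s t : V) : ℝ≥0∞ :=
  ⨅ (R : List V) (_ : IsJumping G P f s t R), ENNReal.ofReal (G.len R)

namespace WDigraph

variable {V : Type}

lemma len_nil' (G : WDigraph V) : G.len ([] : List V) = 0 := rfl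

lemma len_single (G : WDigraph V) (a : V) : G.len [a] = 0 := by simp [len]

lemma len_cons_cons (G : WDigraph V) (a b : V) (l : List V) :
    G.len (a :: b :: l) = G.w a b + G.len (b :: l) := by
  simp [len]

lemma len_append_cons (G : WDigraph V) :
    ∀ (A : List V) (x : V) (B : List V),
      G.len (A ++ x :: B) = G.len (A ++ [x]) + G.len (x :: B)
  | [], x, B => by simp [len_single]
  | [a], x, B => by simp [len_cons_cons, len_single]
  | a :: a' :: A, x, B => by
      have ih := len_append_cons G (a' :: A) x B
      simp only [List.cons_append] at ih ⊢
      rw [len_cons_cons, len_cons_cons, ih]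
      ring

lemma len_split (G : WDigraph V) (l : List V) (k : ℕ) (hk : k < l.length) :
    G.len l = G.len (l.take (k + 1)) + G.len (l.drop k) := by
  have h2 : l.take (k + 1) = l.take k ++ [l[k]] := by
    rw [List.take_succ, List.getElem?_eq_getElem hk]; rfl
  calc G.len l = G.len (l.take k ++ l[k] :: l.drop (k + 1)) := by
        rw [← List.drop_eq_getElem_cons hk, List.take_append_drop]
    _ = G.len (l.take k ++ [l[k]]) + G.len (l[k] :: l.drop (k + 1)) := len_append_cons ..
    _ = _ := by rw [← h2, ← List.drop_eq_getElem_cons hk]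

lemma len_nonneg (G : WDigraph V) (hw : G.PosWeights) :
    ∀ l : List V, l.Chain' G.Adj → 0 ≤ G.len l
  | [], _ => le_of_eq (len_nil' G).symm
  | [a], _ => le_of_eq (len_single G a).symm
  | a :: b :: l, h => by
      simp only [List.Chain', List.isChain_cons_cons] at h
      rw [len_cons_cons]
      have h1 := len_nonneg G hw (b :: l) h.2
      have h2 := le_of_lt (hw a b h.1)
      linarith

lemma chain'_deleteVert (G : WDigraph V) (x : V) :
    ∀ (l : List V), l.Chain' G.Adj → x ∉ l → l.Chain' (G.deleteVert x).Adj
  | [], _, _ => List.isChain_nil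
  | [a], _, _ => List.isChain_singleton a
  | a :: b :: l, h, hx => by
      simp only [List.Chain', List.isChain_cons_cons] at h ⊢
      simp only [List.mem_cons, not_or] at hx
      refine ⟨⟨h.1, Ne.symm hx.1, Ne.symm hx.2.1⟩,
        chain'_deleteVert G x (b :: l) h.2 ?_⟩
      simp only [List.mem_cons, not_or]
      exact hx.2

lemma not_mem_of_chain'_deleteVert (G : WDigraph V) (y : V) :
    ∀ (l : List V), l.Chain' (G.deleteVert y).Adj → 2 ≤ l.length → y ∉ l
  | [], _, h => by simp at h
  | [a], _, h => by simp at h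
  | a :: b :: l, h, _ => by
      simp only [List.Chain', List.isChain_cons_cons] at h
      obtain ⟨⟨_, ha, hb⟩, h2⟩ := h
      intro hm
      rcases List.mem_cons.mp hm with rfl | hm
      · exact ha rfl
      cases l with
      | nil =>
          exact hb (List.mem_singleton.mp hm).symm
      | cons c l =>
          exact not_mem_of_chain'_deleteVert G y (b :: c :: l) h2 (by simp) hm

end WDigraph

/-- **Suffixes of departing paths are safely usable (Lemma `pisbetter`).**
`P` is a path of `G` starting at `s` all of whose prefixes are shortest paths;
`v_b = P[b]` strictly precedes `v_c = P[c]` on `P`; `v_f = P[f] ∈ V(P) \ {s}`; and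
`Q = P[0,b] ++ Q'` is an `s`–`v_c` departing path avoiding `v_f` whose branching vertex
is `v_b` (so `Q'` avoids `P[0, f−1]`), i.e. whose prefix from `s` to `v_b` equals the
sub-path of `P` from `s` to `v_b`.  Then:
(i) `dist_P(v_b, v_c) ≤ w(Q) − dist_P(s, v_b)`; and
(ii) for every `x ∈ V(P) \ {v_b, v_c}`, the graph `G − x` contains a path from `v_b`
to `v_c` of length `w(Q) − dist_P(s, v_b)`. -/
theorem departing_suffix_usable {V : Type} [Fintype V] (G : WDigraph V)
    (hw : G.PosWeights) (s : V) (P : List V)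
    (hchain : P.Chain' G.Adj) (hnodup : P.Nodup) (hhead : P.head? = some s)
    (hshort : ShortestPrefixes G s P)
    (b c f : ℕ) (hbc : b < c) (hcp : c < P.length)
    (hbf : b < f) (hf1 : 1 ≤ f) (hf2 : f < P.length)
    (Q Q' : List V)
    (hQ : IsDeparting G P f s (P.getD c s) Q)
    (hdecomp : Q = P.take (b + 1) ++ Q')
    (hQ' : ∀ a ∈ Q', a ∉ P.take f) :
    G.len ((P.take (c + 1)).drop b) ≤ G.len Q - G.len (P.take (b + 1)) ∧
    ∀ x ∈ P, x ≠ P.getD b s → x ≠ P.getD c s →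
      ∃ R, (G.deleteVert x).IsPathFrom (P.getD b s) (P.getD c s) R ∧
        G.len R = G.len Q - G.len (P.take (b + 1)) := by
  classical
  obtain ⟨hpath, hC1, hC2⟩ := hQ
  obtain ⟨hchainQ, hnodupQ, hheadQ, hlastQ⟩ := hpath
  have hbp : b < P.length := lt_trans hbc hcp
  have hfp : f < P.length := hf2
  have hPb : P.getD b s = P[b] := List.getD_eq_getElem P s hbp
  have hPc : P.getD c s = P[c] := List.getD_eq_getElem P s hcp
  have hPf : P.getD f s = P[f] := List.getD_eq_getElem P s hfp
  -- Q' is nonempty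
  have htake : P.take (b + 1) = P.take b ++ [P.getD b s] := by
    rw [List.take_succ, List.getElem?_eq_getElem hbp, hPb]; rfl
  have hQ'ne : Q' ≠ [] := by
    intro h
    rw [h, List.append_nil, htake] at hdecomp
    rw [hdecomp] at hlastQ
    rw [List.getLast?_append] at hlastQ
    simp only [List.getLast?_singleton] at hlastQ
    have : P.getD b s = P.getD c s := by
      simpa using hlastQ
    rw [hPb, hPc] at this
    exact absurd ((hnodup.getElem_inj_iff).mp this) (Nat.ne_of_lt hbc)
  -- the suffix R of Q
  set R : List V := P.getD b s :: Q' with hRdef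
  have hQR : Q = P.take b ++ R := by rw [hdecomp, htake]; simp [hRdef]
  have hRsuffix : R <:+ Q := ⟨P.take b, hQR.symm⟩
  -- length bookkeeping for Q
  have hlenQ : G.len Q = G.len (P.take (b + 1)) + G.len R := by
    rw [hQR, hRdef, WDigraph.len_append_cons, ← htake]
  -- Q is a path in G
  have hchainQG : Q.Chain' G.Adj := hchainQ.imp (fun a b h => h.1)
  have hQpathG : G.IsPathFrom s (P.getD c s) Q := ⟨hchainQG, hnodupQ, hheadQ, hlastQ⟩
  have hQnonneg : 0 ≤ G.len Q := WDigraph.len_nonneg G hw Q hchainQG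
  -- part (i)
  have hTlen : (P.take (c + 1)).length = c + 1 := by
    rw [List.length_take]; omega
  have hbT : b < (P.take (c + 1)).length := by omega
  have hTsplit : G.len (P.take (c + 1)) =
      G.len ((P.take (c + 1)).take (b + 1)) + G.len ((P.take (c + 1)).drop b) :=
    WDigraph.len_split G _ b hbT
  have hTtake : (P.take (c + 1)).take (b + 1) = P.take (b + 1) := by
    rw [List.take_take]; congr 1; omega
  have hdistle : G.dist s (P.getD c s) ≤ ENNReal.ofReal (G.len Q) :=
    iInf₂_le Q hQpathG
  have hofle : ENNReal.ofReal (G.len (P.take (c + 1))) ≤ ENNReal.ofReal (G.len Q) :=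
    (hshort c hcp).symm ▸ hdistle
  have hreal : G.len (P.take (c + 1)) ≤ G.len Q :=
    (ENNReal.ofReal_le_ofReal_iff hQnonneg).mp hofle
  constructor
  · rw [hTtake] at hTsplit; linarith
  -- part (ii)
  intro x hxP hxb hxc
  obtain ⟨i, hi, hPi⟩ := List.getElem_of_mem hxP
  have hchainR : R.Chain' (G.deleteVert (P.getD f s)).Adj := hchainQ.suffix hRsuffix
  have hRlen2 : 2 ≤ R.length := by
    rw [hRdef]; simp only [List.length_cons]
    have := List.length_pos_iff.mpr hQ'ne; omega
  have hxR : x ∉ R := by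
    rcases lt_trichotomy i f with hif | hif | hif
    · -- x lies on P[0, f-1]
      have hxtake : x ∈ P.take f := by
        have hlen : i < (P.take f).length := by rw [List.length_take]; omega
        have : (P.take f)[i] = x := by rw [List.getElem_take]; exact hPi
        exact this ▸ List.getElem_mem hlen
      rw [hRdef]
      simp only [List.mem_cons, not_or]
      exact ⟨hxb, fun hm => hQ' x hm hxtake⟩
    · -- x = P[f]
      subst hif
      have : x = P.getD i s := by rw [List.getD_eq_getElem P s hi, hPi]
      rw [this]
      exact WDigraph.not_mem_of_chain'_deleteVert G _ R hchainR hRlen2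
    · -- x lies on P[f+1, p-1]
      intro hm
      have hxQ : x ∈ Q := hRsuffix.sublist.mem hm
      have hQne : Q ≠ [] := by intro h; rw [h] at hheadQ; simp at hheadQ
      have hxdrop : x ∈ P.drop (f + 1) := by
        have hlen : i - (f + 1) < (P.drop (f + 1)).length := by
          rw [List.length_drop]; omega
        have : (P.drop (f + 1))[i - (f + 1)] = x := by
          rw [List.getElem_drop]
          have : f + 1 + (i - (f + 1)) = i := by omega
          simp_rw [this]; exact hPi
        exact this ▸ List.getElem_mem hlen
      have hxdl : x ∉ Q.dropLast := fun h => hC2 x h hxdrop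
      have : x ∈ Q.dropLast ++ [Q.getLast hQne] := by
        rw [List.dropLast_append_getLast]; exact hxQ
      rcases List.mem_append.mp this with h | h
      · exact hxdl h
      · have hx : x = Q.getLast hQne := List.mem_singleton.mp h
        have : Q.getLast? = some (Q.getLast hQne) := List.getLast?_eq_getLast hQne
        rw [hlastQ] at this
        exact hxc (hx ▸ (Option.some.inj this).symm)
  have hchainRG : R.Chain' G.Adj := hchainR.imp (fun a b h => h.1)
  refine ⟨R, ⟨WDigraph.chain'_deleteVert G x R hchainRG hxR,
    hnodupQ.sublist hRsuffix.sublist, ?_, ?_⟩, by linarith⟩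
  · rw [hRdef]; rfl
  · have : Q.getLast? = R.getLast? := by
      rw [hQR, List.getLast?_append, hRdef]
      cases h : (P.getD b s :: Q').getLast? with
      | none => simp at h
      | some v => simp
    rw [← this, hlastQ]
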